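/- The arithmetic function g(n) = n · Σ_{r|n, s|n} 1/gcd(r,s) is multiplicative, and for a prime p and α ≥ 1, g(p^α) = ((2α+1)p^{α+2} − (2α+3)p^{α+1} + p + 1) / (p−1)². -/

import Mathlib

open Finset

/-- The arithmetic function `g(n) = n · Σ_{r,s ∣ n} 1/gcd(r,s)`. -/
noncomputable def gfun (n : ℕ) : ℚ :=
  (n : ℚ) * ∑ r ∈ n.divisors, ∑ s ∈ n.divisors, 1 / (Nat.gcd r s : ℚ)

lemma gcd_mul_mul {a b r₁ s₁ r₂ s₂ : ℕ} (hab : Nat.gcd a b = 1)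
    (hr₁ : r₁ ∣ a) (hs₁ : s₁ ∣ a) (hr₂ : r₂ ∣ b) (hs₂ : s₂ ∣ b) :
    Nat.gcd (r₁ * r₂) (s₁ * s₂) = Nat.gcd r₁ s₁ * Nat.gcd r₂ s₂ := by
  have hab' : Nat.Coprime a b := hab
  have h1 : Nat.Coprime s₁ s₂ := Nat.Coprime.coprime_dvd_right hs₂ (Nat.Coprime.coprime_dvd_left hs₁ hab')
  have h2 : Nat.Coprime r₂ s₁ := Nat.Coprime.coprime_dvd_right hs₁ (Nat.Coprime.coprime_dvd_left hr₂ hab'.symm)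
  have h3 : Nat.Coprime r₁ s₂ := Nat.Coprime.coprime_dvd_right hs₂ (Nat.Coprime.coprime_dvd_left hr₁ hab')
  rw [Nat.Coprime.gcd_mul _ h1, Nat.Coprime.gcd_mul_right_cancel r₁ h2,
    Nat.Coprime.gcd_mul_left_cancel r₂ h3]

lemma sum_divisors_coprime_mul {a b : ℕ} (hab : Nat.gcd a b = 1) (g : ℕ → ℚ) :
    ∑ r ∈ (a * b).divisors, g r
      = ∑ x ∈ a.divisors ×ˢ b.divisors, g (x.1 * x.2) := by
  rw [Nat.divisors_mul, Finset.mul_def, Finset.sum_image]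
  intro x hx y hy (hxy : x.1 * x.2 = y.1 * y.2)
  simp only [mem_coe, mem_product, Nat.mem_divisors] at hx hy
  have key : ∀ u v : ℕ, u ∣ a → v ∣ b → Nat.gcd (u * v) a = u := by
    intro u v hu hv
    have : Nat.Coprime v a :=
      Nat.Coprime.coprime_dvd_left hv (Nat.Coprime.symm hab)
    rw [Nat.Coprime.gcd_mul_right_cancel u this, Nat.gcd_eq_left hu]
  have h1 : x.1 = y.1 := by
    rw [← key x.1 x.2 hx.1.1 hx.2.1, ← key y.1 y.2 hy.1.1 hy.2.1, hxy]
  have h2 : x.2 = y.2 := by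
    have hb : 0 < y.1 :=
      Nat.pos_of_ne_zero (fun h => hy.1.2 (zero_dvd_iff.mp (h ▸ hy.1.1)))
    have := hxy
    rw [h1] at this
    exact Nat.eq_of_mul_eq_mul_left hb this
  exact Prod.ext h1 h2

lemma alg_lemma (x : ℚ) (hx0 : x ≠ 0) (hx1 : x ≠ 1) (α : ℕ) :
    x ^ α * ∑ i ∈ range (α + 1), ∑ j ∈ range (α + 1), (x ^ min i j)⁻¹
      = ((2 * (α : ℚ) + 1) * x ^ (α + 2) - (2 * (α : ℚ) + 3) * x ^ (α + 1) + x + 1)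
        / (x - 1) ^ 2 := by
  have hx1' : x - 1 ≠ 0 := sub_ne_zero.mpr hx1
  have hxi1 : x⁻¹ ≠ 1 := by
    simpa [inv_eq_one] using hx1
  induction α with
  | zero =>
    simp only [zero_add, pow_zero, one_mul, range_one, sum_singleton, Nat.min_self]
    field_simp
    ring
  | succ α ih =>
    have hS : ∑ i ∈ range (α + 2), ∑ j ∈ range (α + 2), (x ^ min i j)⁻¹
        = (∑ i ∈ range (α + 1), ∑ j ∈ range (α + 1), (x ^ min i j)⁻¹)
          + 2 * (∑ i ∈ range (α + 1), (x ^ i)⁻¹) + (x ^ (α + 1))⁻¹ := by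
      rw [Finset.sum_range_succ]
      have inner : ∀ i ∈ range (α + 1),
          ∑ j ∈ range (α + 2), (x ^ min i j)⁻¹
            = (∑ j ∈ range (α + 1), (x ^ min i j)⁻¹) + (x ^ i)⁻¹ := by
        intro i hi
        rw [Finset.sum_range_succ]
        congr 2
        rw [min_eq_left (mem_range.mp hi).le]
      rw [Finset.sum_congr rfl inner, Finset.sum_add_distrib]
      have last : ∑ j ∈ range (α + 2), (x ^ min (α + 1) j)⁻¹
          = (∑ j ∈ range (α + 1), (x ^ j)⁻¹) + (x ^ (α + 1))⁻¹ := by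
        rw [Finset.sum_range_succ, min_self]
        congr 1
        refine Finset.sum_congr rfl fun j hj => ?_
        rw [min_eq_right (mem_range.mp hj).le]
      rw [last]
      ring
    have hG : x ^ α * ∑ i ∈ range (α + 1), (x ^ i)⁻¹ = (x ^ (α + 1) - 1) / (x - 1) := by
      rw [Finset.mul_sum]
      have step : ∀ i ∈ range (α + 1), x ^ α * (x ^ i)⁻¹ = x ^ (α - i) := by
        intro i hi
        have hle : i ≤ α := Nat.lt_succ_iff.mp (mem_range.mp hi)
        rw [show α = (α - i) + i from (Nat.sub_add_cancel hle).symm, pow_add,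
          mul_inv_cancel_right₀ (pow_ne_zero _ hx0), Nat.add_sub_cancel]
      rw [Finset.sum_congr rfl step]
      have hrefl : ∑ i ∈ range (α + 1), x ^ (α - i) = ∑ i ∈ range (α + 1), x ^ i := by
        rw [← Finset.sum_range_reflect (fun i => x ^ i) (α + 1)]
        exact Finset.sum_congr rfl fun i hi => by congr 1
      rw [hrefl]
      exact geom_sum_eq hx1 _
    rw [hS]
    have hxp : x ^ (α + 1) ≠ 0 := pow_ne_zero _ hx0
    have expand : x ^ (α + 1) * ((∑ i ∈ range (α + 1), ∑ j ∈ range (α + 1), (x ^ min i j)⁻¹)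
          + 2 * (∑ i ∈ range (α + 1), (x ^ i)⁻¹) + (x ^ (α + 1))⁻¹)
        = x * (x ^ α * ∑ i ∈ range (α + 1), ∑ j ∈ range (α + 1), (x ^ min i j)⁻¹)
          + 2 * x * (x ^ α * ∑ i ∈ range (α + 1), (x ^ i)⁻¹) + 1 := by
      field_simp
      ring
    rw [expand, ih, hG]
    push_cast
    field_simp
    ring
  
lemma gcd_pow {p : ℕ} (i j : ℕ) : Nat.gcd (p ^ i) (p ^ j) = p ^ min i j := by
  rcases le_total i j with h | h
  · rw [Nat.gcd_eq_left (pow_dvd_pow _ h), min_eq_left h]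
  · rw [Nat.gcd_eq_right (pow_dvd_pow _ h), min_eq_right h]

/-- `g` is multiplicative, and for a prime `p` and `α ≥ 1`,
`g(p^α) = ((2α+1)p^{α+2} − (2α+3)p^{α+1} + p + 1)/(p−1)²`. -/
theorem gfun_multiplicative_and_prime_pow :
    (∀ a b : ℕ, 0 < a → 0 < b → Nat.gcd a b = 1 → gfun (a * b) = gfun a * gfun b) ∧
    (∀ p α : ℕ, p.Prime → 1 ≤ α →
      gfun (p ^ α) =
        ((2 * (α : ℚ) + 1) * (p : ℚ) ^ (α + 2) - (2 * (α : ℚ) + 3) * (p : ℚ) ^ (α + 1)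
            + (p : ℚ) + 1) / ((p : ℚ) - 1) ^ 2) := by
  constructor
  · intro a b ha hb hab
    unfold gfun
    rw [sum_divisors_coprime_mul hab]
    have inner : ∀ x ∈ a.divisors ×ˢ b.divisors,
        ∑ s ∈ (a * b).divisors, 1 / (Nat.gcd (x.1 * x.2) s : ℚ)
          = ∑ y ∈ a.divisors ×ˢ b.divisors, 1 / (Nat.gcd (x.1 * x.2) (y.1 * y.2) : ℚ) :=
      fun x _ => sum_divisors_coprime_mul hab _
    rw [Finset.sum_congr rfl inner]
    have key : ∀ x ∈ a.divisors ×ˢ b.divisors, ∀ y ∈ a.divisors ×ˢ b.divisors,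
        (1 : ℚ) / (Nat.gcd (x.1 * x.2) (y.1 * y.2) : ℚ)
          = (1 / (Nat.gcd x.1 y.1 : ℚ)) * (1 / (Nat.gcd x.2 y.2 : ℚ)) := by
      intro x hx y hy
      simp only [mem_product, Nat.mem_divisors] at hx hy
      rw [gcd_mul_mul hab hx.1.1 hy.1.1 hx.2.1 hy.2.1]
      push_cast
      rw [div_mul_div_comm, one_mul]
    have hmain : ∑ x ∈ a.divisors ×ˢ b.divisors, ∑ y ∈ a.divisors ×ˢ b.divisors,
        (1 : ℚ) / (Nat.gcd (x.1 * x.2) (y.1 * y.2) : ℚ)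
        = (∑ r ∈ a.divisors, ∑ s ∈ a.divisors, 1 / (Nat.gcd r s : ℚ))
          * (∑ r ∈ b.divisors, ∑ s ∈ b.divisors, 1 / (Nat.gcd r s : ℚ)) := by
      rw [Finset.sum_congr rfl fun x hx => Finset.sum_congr rfl fun y hy => key x hx y hy]
      simp_rw [Finset.sum_product]
      rw [Finset.sum_mul_sum]
      refine Finset.sum_congr rfl fun r₁ _ => Finset.sum_congr rfl fun r₂ _ => ?_
      rw [Finset.sum_mul_sum]
    rw [hmain]
    push_cast
    ring
  · intro p α hp _
    have hp1 : (1 : ℚ) < (p : ℚ) := by exact_mod_cast hp.one_lt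
    have hx0 : (p : ℚ) ≠ 0 := by positivity
    have hx1 : (p : ℚ) ≠ 1 := ne_of_gt hp1
    unfold gfun
    rw [Nat.sum_divisors_prime_pow hp]
    have inner : ∀ i ∈ range (α + 1),
        ∑ s ∈ (p ^ α).divisors, 1 / (Nat.gcd (p ^ i) s : ℚ)
          = ∑ j ∈ range (α + 1), ((p : ℚ) ^ min i j)⁻¹ := by
      intro i _
      rw [Nat.sum_divisors_prime_pow hp]
      refine Finset.sum_congr rfl fun j _ => ?_
      rw [gcd_pow, one_div]
      push_cast
      rfl
    rw [Finset.sum_congr rfl inner]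
    have := alg_lemma (p : ℚ) hx0 hx1 α
    push_cast
    convert this using 2
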